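/- Let A, B, C, D, E, F, M be points of ℝ × ℝ whose first coordinates are pairwise distinct, forming a complete quadrilateral: A, B, E are collinear; C, D, E are collinear; B, C, F are collinear; A, D, F are collinear; and no three of A, B, C, D are collinear. Assume M ≠ B, and suppose there exist reals α₁, β₁, γ₁ with the graph of x ↦ α₁x² + β₁x + γ₁ containing A, B, F, M, and reals α₂, β₂, γ₂ with the graph of x ↦ α₂x² + β₂x + γ₂ containing B, C, E, M. Then there exist reals α₃, β₃, γ₃ with the graph of x ↦ α₃x² + β₃x + γ₃ containing C, D, F, M, and reals α₄, β₄, γ₄ with the graph of x ↦ α₄x² + β₄x + γ₄ containing D, A, E, M. In other words, the four circumparabolas of (A,B,F), (B,C,E), (C,D,F), (D,A,E) concur at a common point M. -/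
import Mathlib

private lemma collinear_cross_da {P Q R : ℝ × ℝ}
    (h : Collinear ℝ ({P, Q, R} : Set (ℝ × ℝ))) :
    (Q.1 - P.1) * (R.2 - P.2) - (R.1 - P.1) * (Q.2 - P.2) = 0 := by
  obtain ⟨v, hv⟩ := (collinear_iff_of_mem (Set.mem_insert P _)).mp h
  obtain ⟨q, hq⟩ := hv Q (by simp)
  obtain ⟨r, hr⟩ := hv R (by simp)
  rw [hq, hr]
  obtain ⟨v1, v2⟩ := v
  obtain ⟨p1, p2⟩ := P
  simp only [vadd_eq_add, Prod.smul_mk, Prod.mk_add_mk, smul_eq_mul]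
  ring

/-- DA version of Miquel's quadrilateral theorem: for a complete quadrilateral
`A, B, C, D` with diagonal points `E = AB ∩ CD`, `F = BC ∩ AD`, if the
circumparabolas through `A, B, F` and through `B, C, E` both pass through `M`,
then so do circumparabolas through `C, D, F` and through `D, A, E`: the four
circumparabolas concur at a common point. -/
theorem da_miquel_quadrilateral (A B C D E F M : ℝ × ℝ)
    (hdist : ([A, B, C, D, E, F, M] : List (ℝ × ℝ)).Pairwise (fun P Q => P.1 ≠ Q.1))
    (hABE : Collinear ℝ ({A, B, E} : Set (ℝ × ℝ)))
    (hCDE : Collinear ℝ ({C, D, E} : Set (ℝ × ℝ)))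
    (hBCF : Collinear ℝ ({B, C, F} : Set (ℝ × ℝ)))
    (hADF : Collinear ℝ ({A, D, F} : Set (ℝ × ℝ)))
    (hABC : ¬ Collinear ℝ ({A, B, C} : Set (ℝ × ℝ)))
    (hABD : ¬ Collinear ℝ ({A, B, D} : Set (ℝ × ℝ)))
    (hACD : ¬ Collinear ℝ ({A, C, D} : Set (ℝ × ℝ)))
    (hBCD : ¬ Collinear ℝ ({B, C, D} : Set (ℝ × ℝ)))
    (hMB : M ≠ B)
    (h₁ : ∃ α β γ : ℝ,
        α * A.1 ^ 2 + β * A.1 + γ = A.2 ∧ α * B.1 ^ 2 + β * B.1 + γ = B.2 ∧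
        α * F.1 ^ 2 + β * F.1 + γ = F.2 ∧ α * M.1 ^ 2 + β * M.1 + γ = M.2)
    (h₂ : ∃ α β γ : ℝ,
        α * B.1 ^ 2 + β * B.1 + γ = B.2 ∧ α * C.1 ^ 2 + β * C.1 + γ = C.2 ∧
        α * E.1 ^ 2 + β * E.1 + γ = E.2 ∧ α * M.1 ^ 2 + β * M.1 + γ = M.2) :
    (∃ α β γ : ℝ,
        α * C.1 ^ 2 + β * C.1 + γ = C.2 ∧ α * D.1 ^ 2 + β * D.1 + γ = D.2 ∧
        α * F.1 ^ 2 + β * F.1 + γ = F.2 ∧ α * M.1 ^ 2 + β * M.1 + γ = M.2) ∧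
    (∃ α β γ : ℝ,
        α * D.1 ^ 2 + β * D.1 + γ = D.2 ∧ α * A.1 ^ 2 + β * A.1 + γ = A.2 ∧
        α * E.1 ^ 2 + β * E.1 + γ = E.2 ∧ α * M.1 ^ 2 + β * M.1 + γ = M.2) := by
  obtain ⟨α1, β1, γ1, eA, eB, eF, eM1⟩ := h₁
  obtain ⟨α2, β2, γ2, eB2, eC, eE, eM2⟩ := h₂
  simp only [List.pairwise_cons] at hdist
  have rA := hdist.1
  have rB := hdist.2.1
  have rC := hdist.2.2.1
  have rD := hdist.2.2.2.1
  have rE := hdist.2.2.2.2.1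
  have nBM : B.1 - M.1 ≠ 0 := sub_ne_zero.mpr (rB M (by simp))
  have nBA : B.1 - A.1 ≠ 0 := sub_ne_zero.mpr (rA B (by simp)).symm
  have nEB : E.1 - B.1 ≠ 0 := sub_ne_zero.mpr (rB E (by simp)).symm
  have nCB : C.1 - B.1 ≠ 0 := sub_ne_zero.mpr (rB C (by simp)).symm
  have nFB : F.1 - B.1 ≠ 0 := sub_ne_zero.mpr (rB F (by simp)).symm
  have nEC : E.1 - C.1 ≠ 0 := sub_ne_zero.mpr (rC E (by simp)).symm
  have nFA : F.1 - A.1 ≠ 0 := sub_ne_zero.mpr (rA F (by simp)).symm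
  have nEA : E.1 - A.1 ≠ 0 := sub_ne_zero.mpr (rA E (by simp)).symm
  have nEM : E.1 - M.1 ≠ 0 := sub_ne_zero.mpr (rE M (by simp))
  have nDM : D.1 - M.1 ≠ 0 := sub_ne_zero.mpr (rD M (by simp))
  have cABE := collinear_cross_da hABE
  have cCDE := collinear_cross_da hCDE
  have cBCF := collinear_cross_da hBCF
  have cADF := collinear_cross_da hADF
  -- the two parabolas have related coefficients
  have hstar : (α1 - α2) * (B.1 + M.1) + (β1 - β2) = 0 :=
    mul_left_cancel₀ nBM (by linear_combination eB - eM1 - eB2 + eM2)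
  have hI0 : α1 * (A.1 + B.1) + β1 - (α2 * (B.1 + E.1) + β2) = 0 :=
    mul_left_cancel₀ nBA (mul_left_cancel₀ nEB (by
      linear_combination -cABE + (B.1 - A.1) * eB2 - (B.1 - A.1) * eE
        - (E.1 - B.1) * eA + (E.1 - B.1) * eB))
  have hII0 : α2 * (B.1 + C.1) + β2 - (α1 * (B.1 + F.1) + β1) = 0 :=
    mul_left_cancel₀ nCB (mul_left_cancel₀ nFB (by
      linear_combination -cBCF + (C.1 - B.1) * eB - (C.1 - B.1) * eF
        - (F.1 - B.1) * eB2 + (F.1 - B.1) * eC))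
  have hIp : α1 * (A.1 - M.1) - α2 * (E.1 - M.1) = 0 := by linear_combination hI0 - hstar
  have hIIp : α2 * (C.1 - M.1) - α1 * (F.1 - M.1) = 0 := by linear_combination hII0 + hstar
  have hD2 : D.2 - C.2 - (D.1 - C.1) * (α2 * (C.1 + E.1) + β2) = 0 :=
    mul_left_cancel₀ nEC (by linear_combination -cCDE - (D.1 - C.1) * eE + (D.1 - C.1) * eC)
  have hD4 : D.2 - A.2 - (D.1 - A.1) * (α1 * (A.1 + F.1) + β1) = 0 :=
    mul_left_cancel₀ nFA (by linear_combination -cADF - (D.1 - A.1) * eF + (D.1 - A.1) * eA)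
  have hW : α1 * (F.1 - M.1) * (E.1 - A.1) - (α1 - α2) * (B.1 - M.1) * (D.1 - M.1) = 0 := by
    linear_combination hD2 - hD4 + eA - eM1 - eC + eM2 - (D.1 - M.1) * hstar
      - (D.1 - M.1) * hIp + (D.1 - E.1) * hIIp
  have hKey1 : α1 * ((E.1 - M.1) * (F.1 - M.1) - (B.1 - M.1) * (D.1 - M.1)) = 0 :=
    mul_left_cancel₀ nEA (by
      linear_combination (E.1 - M.1) * hW + (B.1 - M.1) * (D.1 - M.1) * hIp)
  have hKey2 : α2 * ((E.1 - M.1) * (F.1 - M.1) - (B.1 - M.1) * (D.1 - M.1)) = 0 :=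
    mul_left_cancel₀ nEM (by
      linear_combination (A.1 - M.1) * hKey1
        - ((E.1 - M.1) * (F.1 - M.1) - (B.1 - M.1) * (D.1 - M.1)) * hIp)
  constructor
  · set a3 : ℝ := α2 * (E.1 - M.1) / (D.1 - M.1) with ha3d
    have ha3 : a3 * (D.1 - M.1) = α2 * (E.1 - M.1) := by
      rw [ha3d]; field_simp
    refine ⟨a3, (α2 - a3) * (C.1 + M.1) + β2,
      M.2 - a3 * M.1 ^ 2 - ((α2 - a3) * (C.1 + M.1) + β2) * M.1, ?_, ?_, ?_, by ring⟩
    · exact mul_left_cancel₀ nDM (by linear_combination (D.1 - M.1) * eC - (D.1 - M.1) * eM2)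
    · exact mul_left_cancel₀ nDM (by
        linear_combination (D.1 - M.1) * (D.1 - C.1) * ha3 + (D.1 - M.1) * eC
          - (D.1 - M.1) * eM2 - (D.1 - M.1) * hD2)
    · exact mul_left_cancel₀ nDM (by
        linear_combination (F.1 - M.1) * (F.1 - C.1) * ha3 + (F.1 - M.1) * eC
          - (F.1 - M.1) * eM2 - (F.1 - M.1) * eA + (F.1 - M.1) * eM1 + (D.1 - M.1) * eF
          - (D.1 - M.1) * eM1 - (F.1 - M.1) * hD2 + (F.1 - M.1) * hD4
          + (E.1 - M.1) * hKey2 - (A.1 - M.1) * hKey1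
          + (-(B.1 * D.1) + B.1 * M.1 + D.1 * F.1 + E.1 * F.1 - E.1 * M.1 - F.1 ^ 2) * hIp)
  · set a4 : ℝ := α1 * (F.1 - M.1) / (D.1 - M.1) with ha4d
    have ha4 : a4 * (D.1 - M.1) = α1 * (F.1 - M.1) := by
      rw [ha4d]; field_simp
    refine ⟨a4, (α1 - a4) * (A.1 + M.1) + β1,
      M.2 - a4 * M.1 ^ 2 - ((α1 - a4) * (A.1 + M.1) + β1) * M.1, ?_, ?_, ?_, by ring⟩
    · exact mul_left_cancel₀ nDM (by
        linear_combination (D.1 - M.1) * (D.1 - A.1) * ha4 + (D.1 - M.1) * eA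
          - (D.1 - M.1) * eM1 - (D.1 - M.1) * hD4)
    · exact mul_left_cancel₀ nDM (by linear_combination (D.1 - M.1) * eA - (D.1 - M.1) * eM1)
    · exact mul_left_cancel₀ nDM (by
        linear_combination (E.1 - M.1) * (E.1 - A.1) * ha4
          + (-B.1 + D.1 + E.1 - M.1) * eB + (-B.1 + D.1 + E.1 - M.1) * (-eM1)
          + (D.1 - M.1) * eE - (D.1 - M.1) * eM2
          + (B.1 - D.1 - E.1 + M.1) * eB2 + (B.1 - D.1 - E.1 + M.1) * (-eM2)
          + (E.1 - A.1) * hKey1 + (B.1 - D.1) * (B.1 - E.1) * hstar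
          + (E.1 - B.1) * (D.1 - M.1) * hIp)
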